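/- arXiv:1601.01493 — 2 statements merged into one kernel-verified Lean document; each statement's English description precedes it below -/
import Mathlib

section
/- For every k ≥ 2, every finite k-uniform hypergraph F, and every q ≥ 2, there exists a finite k-uniform hypergraph G such that every q-coloring of the edges of G contains an induced monochromatic copy of F; that is, the induced Ramsey number r_ind(F;q) is finite. -/
open Finset

/-- `E` is a `k`-uniform edge set: every edge has exactly `k` vertices. -/
def IsKUniform (k : ℕ) {V : Type*} (E : Finset (Finset V)) : Prop :=
  ∀ e ∈ E, e.card = k

/-- The coloring `χ` of the `k`-uniform hypergraph `G` on `Fin n` contains an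
induced monochromatic copy of `F`. -/
def HasIndMonoCopy (k : ℕ) {t n q : ℕ} (F : Finset (Finset (Fin t)))
    (G : Finset (Finset (Fin n))) (χ : Finset (Fin n) → Fin q) : Prop :=
  ∃ (f : Fin t → Fin n) (c : Fin q), Function.Injective f ∧
    (∀ s : Finset (Fin t), s.card = k → (s ∈ F ↔ s.image f ∈ G)) ∧
    ∀ e ∈ F, χ (e.image f) = c

namespace IndRam


/-- Pre-homogeneous set: the color of `insert x s` for a `k`-set `s ⊆ A` and `x ∈ A` above `s`
does not depend on `x`. -/
def PreHom (k : ℕ) {q : ℕ} (κ : Finset ℕ → Fin q) (A : Finset ℕ) : Prop :=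
  ∀ s ⊆ A, s.card = k → ∀ x ∈ A, ∀ y ∈ A, (∀ i ∈ s, i < x) → (∀ i ∈ s, i < y) →
    κ (insert x s) = κ (insert y s)

def Inv (k : ℕ) {q : ℕ} (κ : Finset ℕ → Fin q) (A X : Finset ℕ) : Prop :=
  ∀ s ⊆ A, s.card = k → ∀ x ∈ A ∪ X, ∀ y ∈ A ∪ X, (∀ i ∈ s, i < x) → (∀ i ∈ s, i < y) →
    κ (insert x s) = κ (insert y s)

def B (q : ℕ) : ℕ → ℕ → ℕ
  | _, 0 => 0
  | a, n + 1 => 1 + q ^ 2 ^ (a + 1) * B q (a + 1) n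

lemma pool (k q : ℕ) (hq : 0 < q) (κ : Finset ℕ → Fin q) :
    ∀ (n : ℕ) (A X : Finset ℕ), (∀ a ∈ A, ∀ x ∈ X, a < x) → Inv k κ A X →
      B q A.card n ≤ X.card → ∃ T ⊆ X, T.card = n ∧ PreHom k κ (A ∪ T) := by
  intro n
  induction n with
  | zero =>
    intro A X _ hinv _
    refine ⟨∅, empty_subset _, card_empty, ?_⟩
    rw [union_empty]
    intro s hs hsk x hx y hy hxs hys
    exact hinv s hs hsk x (mem_union_left _ hx) y (mem_union_left _ hy) hxs hys
  | succ n ih =>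
    intro A X horder hinv hcard
    rw [B] at hcard
    have hX : X.Nonempty := card_pos.1 (by omega)
    set x₀ := X.min' hX with hx₀
    have hx₀X : x₀ ∈ X := X.min'_mem hX
    have hx₀A : x₀ ∉ A := fun h => lt_irrefl x₀ (horder x₀ h x₀ hx₀X)
    set A' := insert x₀ A with hA'
    have hA'card : A'.card = A.card + 1 := card_insert_of_notMem hx₀A
    set P := A'.powersetCard k with hP
    set φ : ℕ → ({s // s ∈ P} → Fin q) := fun x s => κ (insert x s.1) with hφ
    have hcardP : (Finset.univ : Finset ({s // s ∈ P} → Fin q)).card ≤ q ^ 2 ^ (A.card + 1) := by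
      rw [card_univ, Fintype.card_fun, Fintype.card_fin, Fintype.card_coe]
      refine Nat.pow_le_pow_right hq ?_
      calc P.card ≤ A'.powerset.card := card_le_card (by
            rw [hP, powersetCard_eq_filter]; exact filter_subset _ _)
        _ = 2 ^ A'.card := card_powerset _
        _ ≤ 2 ^ (A.card + 1) := by rw [hA'card]
    have hXe : q ^ 2 ^ (A.card + 1) * B q (A.card + 1) n ≤ (X.erase x₀).card := by
      rw [card_erase_of_mem hx₀X]; omega
    haveI : Nonempty ({s // s ∈ P} → Fin q) := ⟨fun _ => ⟨0, hq⟩⟩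
    obtain ⟨v, -, hv⟩ := Finset.exists_le_card_fiber_of_mul_le_card_of_maps_to
      (f := φ) (t := Finset.univ) (fun a _ => mem_univ _) univ_nonempty
      (le_trans (Nat.mul_le_mul_right _ hcardP) hXe)
    set C := (X.erase x₀).filter (fun x => φ x = v) with hC
    have hCX : C ⊆ X := (filter_subset _ _).trans (erase_subset _ _)
    have hCx₀ : ∀ x ∈ C, x₀ < x := by
      intro x hx
      have hx' : x ∈ X.erase x₀ := mem_of_mem_filter _ hx
      exact lt_of_le_of_ne (X.min'_le x (mem_of_mem_erase hx')) (Ne.symm (ne_of_mem_erase hx'))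
    have horder' : ∀ a ∈ A', ∀ x ∈ C, a < x := by
      intro a ha x hx
      rcases mem_insert.1 ha with rfl | ha
      · exact hCx₀ x hx
      · exact horder a ha x (hCX hx)
    have hinv' : Inv k κ A' C := by
      intro s hs hsk x hx y hy hxs hys
      by_cases hx₀s : x₀ ∈ s
      · -- both x and y must lie in C
        have hmem : ∀ z, z ∈ A' ∪ C → (∀ i ∈ s, i < z) → z ∈ C := by
          intro z hz hzs
          have hzx₀ : x₀ < z := hzs x₀ hx₀s
          rcases mem_union.1 hz with hz | hz
          · rcases mem_insert.1 hz with rfl | hz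
            · omega
            · exact absurd (horder z hz x₀ hx₀X) (by omega)
          · exact hz
        have hxC := hmem x hx hxs
        have hyC := hmem y hy hys
        have hsP : s ∈ P := by
          rw [hP, mem_powersetCard]; exact ⟨hs, hsk⟩
        have h1 := congrFun (mem_filter.1 hxC).2 ⟨s, hsP⟩
        have h2 := congrFun (mem_filter.1 hyC).2 ⟨s, hsP⟩
        simp only [hφ] at h1 h2
        rw [h1, h2]
      · have hsA : s ⊆ A := by
          intro i hi
          rcases mem_insert.1 (hs hi) with rfl | h
          · exact absurd hi hx₀s
          · exact h
        have hmem : ∀ z, z ∈ A' ∪ C → z ∈ A ∪ X := by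
          intro z hz
          rcases mem_union.1 hz with hz | hz
          · rcases mem_insert.1 hz with rfl | hz
            · exact mem_union_right _ hx₀X
            · exact mem_union_left _ hz
          · exact mem_union_right _ (hCX hz)
        exact hinv s hsA hsk x (hmem x hx) y (hmem y hy) hxs hys
    have hCcard : B q A'.card n ≤ C.card := by rw [hA'card]; exact hv
    obtain ⟨T', hT'C, hT'card, hT'pre⟩ := ih A' C horder' hinv' hCcard
    refine ⟨insert x₀ T', ?_, ?_, ?_⟩
    · intro z hz
      rcases mem_insert.1 hz with rfl | hz
      · exact hx₀X
      · exact hCX (hT'C hz)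
    · rw [card_insert_of_notMem fun h => (ne_of_mem_erase (mem_of_mem_filter _ (hT'C h))) rfl,
        hT'card]
    · have : A ∪ insert x₀ T' = A' ∪ T' := by
        rw [hA', insert_union, union_insert]
      rwa [this]

lemma ram (k : ℕ) (hk : 1 ≤ k) (q t : ℕ) (hq : 0 < q) :
    ∃ M : ℕ, ∀ (κ : Finset ℕ → Fin q) (X : Finset ℕ), M ≤ X.card →
      ∃ S ⊆ X, S.card = t ∧ ∃ c, ∀ e ⊆ S, e.card = k → κ e = c := by
  induction k, hk using Nat.le_induction generalizing t with
  | base =>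
    refine ⟨q * t, fun κ X hX => ?_⟩
    haveI : Nonempty (Fin q) := ⟨⟨0, hq⟩⟩
    obtain ⟨c, -, hc⟩ := Finset.exists_le_card_fiber_of_mul_le_card_of_maps_to
      (f := fun x => κ {x}) (t := Finset.univ) (fun a _ => mem_univ _) univ_nonempty
      (by rwa [card_univ, Fintype.card_fin])
    obtain ⟨S, hS, hScard⟩ := Finset.exists_subset_card_eq hc
    refine ⟨S, hS.trans (filter_subset _ _), hScard, c, fun e he hec => ?_⟩
    obtain ⟨x, rfl⟩ := card_eq_one.1 hec
    exact (mem_filter.1 (hS (he (mem_singleton_self x)))).2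
  | succ k hk1 ih =>
    obtain ⟨M₁, hM₁⟩ := ih t
    refine ⟨B q 0 (M₁ + 1), fun κ X hX => ?_⟩
    have hinv : Inv k κ ∅ X := by
      intro s hs hsk
      rw [subset_empty.1 hs] at hsk
      simp at hsk; omega
    obtain ⟨A, hAX, hAcard, hApre⟩ := pool k q hq κ (M₁ + 1) ∅ X (by simp) hinv
      (by simpa using hX)
    rw [empty_union] at hApre
    have hA : A.Nonempty := card_pos.1 (by omega)
    set top := A.max' hA with htop
    have htopA : top ∈ A := A.max'_mem hA
    set A' := A.erase top with hA'
    have hA'A : A' ⊆ A := erase_subset _ _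
    obtain ⟨S, hSA', hScard, c, hc⟩ := hM₁ (fun s => κ (insert top s)) A'
      (by rw [hA', card_erase_of_mem htopA, hAcard]; omega)
    refine ⟨S, (hSA'.trans hA'A).trans hAX, hScard, c, fun e heS hecard => ?_⟩
    have he : e.Nonempty := card_pos.1 (by omega)
    set m := e.max' he with hm
    have hme : m ∈ e := e.max'_mem he
    have hs : (e.erase m).card = k := by rw [card_erase_of_mem hme, hecard]; omega
    have hsub' : e.erase m ⊆ A := by
      intro i hi
      exact (hSA'.trans hA'A) (heS (mem_of_mem_erase hi))
    have h1 : κ e = κ (insert m (e.erase m)) := by rw [insert_erase hme]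
    have h2 : κ (insert m (e.erase m)) = κ (insert top (e.erase m)) := by
      refine hApre (e.erase m) hsub' hs m ((hSA'.trans hA'A) (heS hme)) top htopA ?_ ?_
      · intro i hi
        exact lt_of_le_of_ne (e.le_max' i (mem_of_mem_erase hi)) (ne_of_mem_erase hi)
      · intro i hi
        have hiA' : i ∈ A' := hSA' (heS (mem_of_mem_erase hi))
        exact lt_of_le_of_ne (A.le_max' i (mem_of_mem_erase hiA')) (ne_of_mem_erase hiA')
    rw [h1, h2]
    exact hc (e.erase m) ((erase_subset _ _).trans heS) hs

lemma ramseyFin (k q t : ℕ) (hk : 1 ≤ k) (hq : 0 < q) :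
    ∃ T : ℕ, 0 < T ∧ ∀ κ : Finset (Fin T) → Fin q, ∃ (S : Finset (Fin T)) (c : Fin q),
      S.card = t ∧ ∀ e ⊆ S, e.card = k → κ e = c := by
  obtain ⟨M, hM⟩ := ram k hk q t hq
  refine ⟨M + 1, Nat.succ_pos _, fun κ => ?_⟩
  set g : ℕ → Fin (M + 1) := fun x => if h : x < M + 1 then ⟨x, h⟩ else ⟨0, Nat.succ_pos _⟩
    with hg
  have hginj : Set.InjOn g (Finset.range (M + 1) : Finset ℕ) := by
    intro a ha b hb hab
    simp only [hg, dif_pos (mem_range.1 ha), dif_pos (mem_range.1 hb), Fin.mk.injEq] at hab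
    exact hab
  obtain ⟨S, hSX, hScard, c, hc⟩ := hM (fun s => κ (s.image g)) (Finset.range (M + 1))
    (by rw [card_range]; omega)
  refine ⟨S.image g, c, ?_, fun e' he' hecard => ?_⟩
  · rw [card_image_of_injOn (hginj.mono (by exact_mod_cast hSX)), hScard]
  · set e := S.filter (fun x => g x ∈ e') with he
    have heS : e ⊆ S := filter_subset _ _
    have himg : e.image g = e' := by
      apply subset_antisymm
      · intro y hy
        obtain ⟨x, hx, rfl⟩ := mem_image.1 hy
        exact (mem_filter.1 hx).2
      · intro y hy
        obtain ⟨x, hx, rfl⟩ := mem_image.1 (he' hy)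
        exact mem_image.2 ⟨x, mem_filter.2 ⟨hx, hy⟩, rfl⟩
    have hecard' : e.card = k := by
      rw [← hecard, ← himg]
      exact (card_image_of_injOn (hginj.mono (fun x hx => by
        exact_mod_cast hSX (heS hx)))).symm
    have := hc e heS hecard'
    rwa [himg] at this



/-- A `T`-partite `k`-uniform system. -/
structure Sys (T k : ℕ) where
  V : Type
  [fin : Fintype V]
  [deq : DecidableEq V]
  part : V → Fin T
  E : Finset (Finset V)
  uni : ∀ e ∈ E, e.card = k
  pinj : ∀ e ∈ E, Set.InjOn part e

attribute [instance] Sys.fin Sys.deq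

variable {T k : ℕ}

def Sys.pset (A : Sys T k) (e : Finset A.V) : Finset (Fin T) := e.image A.part

lemma Sys.pset_card (A : Sys T k) {e} (he : e ∈ A.E) : (A.pset e).card = k := by
  rw [Sys.pset, card_image_of_injOn (A.pinj e he)]; exact A.uni e he

/-- Part-preserving induced embeddings. -/
structure Emb (A B : Sys T k) where
  f : A.V → B.V
  inj : Function.Injective f
  hpart : ∀ v, B.part (f v) = A.part v
  ind : ∀ s : Finset A.V, s ∈ A.E ↔ s.image f ∈ B.E

lemma Emb.pset_image {A B : Sys T k} (g : Emb A B) (e : Finset A.V) :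
    B.pset (e.image g.f) = A.pset e := by
  rw [Sys.pset, Sys.pset, image_image]
  exact image_congr fun v _ => g.hpart v

def Emb.ide (A : Sys T k) : Emb A A := ⟨id, fun a b h => h, fun _ => rfl, by simp⟩

def Emb.comp {A B C : Sys T k} (g : Emb B C) (f : Emb A B) : Emb A C :=
  ⟨g.f ∘ f.f, g.inj.comp f.inj, fun v => by rw [Function.comp_apply, g.hpart, f.hpart],
   fun s => by rw [f.ind, g.ind, image_image]⟩

section Step

variable (R : Sys T k) (K : Finset (Fin T))

def ED : Finset (Finset R.V) := R.E.filter fun e => R.pset e = K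

lemma ED_mem {e} (he : e ∈ ED R K) : e ∈ R.E ∧ R.pset e = K := mem_filter.1 he

noncomputable def pick (e : Finset R.V) (he : e ∈ ED R K) (i : Fin T) (hi : i ∈ K) : R.V :=
  e.choose (fun v => R.part v = i) (by
    obtain ⟨heE, hpe⟩ := mem_filter.1 he
    rw [← hpe] at hi
    obtain ⟨v, hv, hvi⟩ := mem_image.1 hi
    exact ⟨v, ⟨hv, hvi⟩, fun y hy => R.pinj e heE hy.1 hv (by rw [hy.2, hvi])⟩)

lemma pick_mem (e : Finset R.V) (he : e ∈ ED R K) (i : Fin T) (hi : i ∈ K) :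
    pick R K e he i hi ∈ e := Finset.choose_mem _ _ _

lemma pick_part (e : Finset R.V) (he : e ∈ ED R K) (i : Fin T) (hi : i ∈ K) :
    R.part (pick R K e he i hi) = i := by
  unfold pick
  exact Finset.choose_property (fun v => R.part v = i) e _

lemma pick_eq (e : Finset R.V) (he : e ∈ ED R K) (i : Fin T) (hi : i ∈ K) {v : R.V}
    (hv : v ∈ e) (hvi : R.part v = i) : pick R K e he i hi = v :=
  R.pinj e (ED_mem R K he).1 (pick_mem R K e he i hi) hv
    ((pick_part R K e he i hi).trans hvi.symm)

lemma pick_attach (e : Finset R.V) (he : e ∈ ED R K) :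
    K.attach.image (fun i => pick R K e he i.1 i.2) = e := by
  apply subset_antisymm
  · intro x hx
    obtain ⟨i, -, rfl⟩ := mem_image.1 hx
    exact pick_mem R K e he i.1 i.2
  · intro v hv
    have hpv : R.part v ∈ K := by
      rw [← (ED_mem R K he).2]; exact mem_image_of_mem _ hv
    exact mem_image.2 ⟨⟨R.part v, hpv⟩, mem_attach _ _, pick_eq R K e he _ _ hv rfl⟩

lemma part_in_K {e} (hpe : R.pset e = K) : ∀ v ∈ e, R.part v ∈ K := by
  intro v hv; rw [← hpe]; exact mem_image_of_mem _ hv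

lemma pset_eq_K (hK : K.card = k) {e} (heE : e ∈ R.E) (hsub : ∀ v ∈ e, R.part v ∈ K) :
    R.pset e = K := by
  refine Finset.eq_of_subset_of_card_le ?_ ?_
  · intro i hi
    obtain ⟨v, hv, rfl⟩ := mem_image.1 hi
    exact hsub v hv
  · rw [R.pset_card heE, hK]

lemma exists_notin (hK : K.card = k) {e} (heE : e ∈ R.E) (hne : R.pset e ≠ K) :
    ∃ v ∈ e, R.part v ∉ K := by
  by_contra h
  push_neg at h
  exact hne (pset_eq_K R K hK heE h)

abbrev KV := {v : R.V // R.part v ∈ K}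

noncomputable def lift (s : Finset R.V) (hs : ∀ v ∈ s, R.part v ∈ K) : Finset (KV R K) :=
  s.attach.image fun v => ⟨v.1, hs v.1 v.2⟩

lemma lift_val (s : Finset R.V) (hs : ∀ v ∈ s, R.part v ∈ K) :
    (lift R K s hs).image Subtype.val = s := by
  simp [lift, Finset.image_image, Function.comp_def]

variable (ι : Type) [Fintype ι] [DecidableEq ι]

abbrev VD : Type := {p : Fin T × (ι → R.V) // ∀ j, R.part (p.2 j) = p.1}

noncomputable def vtx (w : ι → {e // e ∈ ED R K}) (i : Fin T) (hi : i ∈ K) : VD R ι :=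
  ⟨(i, fun j => pick R K (w j).1 (w j).2 i hi), fun j => pick_part R K (w j).1 (w j).2 i hi⟩

@[simp] lemma vtx_fst (w : ι → {e // e ∈ ED R K}) (i : Fin T) (hi : i ∈ K) :
    (vtx R K ι w i hi).1.1 = i := rfl

@[simp] lemma vtx_snd (w : ι → {e // e ∈ ED R K}) (i : Fin T) (hi : i ∈ K) (j : ι) :
    (vtx R K ι w i hi).1.2 j = pick R K (w j).1 (w j).2 i hi := rfl

noncomputable def edgeOf (w : ι → {e // e ∈ ED R K}) : Finset (VD R ι) :=
  K.attach.image fun i => vtx R K ι w i.1 i.2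

noncomputable def ED' : Finset (Finset (VD R ι)) := Finset.univ.image (edgeOf R K ι)

def IsCopy (σ : KV R K → VD R ι) : Prop :=
  Function.Injective σ ∧ (∀ v, (σ v).1.1 = R.part v.1) ∧
    ∀ s : Finset (KV R K), s.image Subtype.val ∈ R.E ↔ s.image σ ∈ ED' R K ι

abbrev Copies := {σ : KV R K → VD R ι // IsCopy R K ι σ}

noncomputable instance : Fintype (Copies R K ι) :=
  @Subtype.fintype _ _ (Classical.decPred _) _

instance : DecidableEq (Copies R K ι) := fun a b =>
  decidable_of_iff _ (Subtype.ext_iff (p := IsCopy R K ι)).symm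

abbrev VQ := (VD R ι) ⊕ (Copies R K ι × {v : R.V // R.part v ∉ K})

noncomputable instance : Fintype (VQ R K ι) := by unfold VQ; infer_instance
instance : DecidableEq (VQ R K ι) := by unfold VQ; infer_instance

def partQ : VQ R K ι → Fin T := Sum.elim (fun p => p.1.1) (fun p => R.part p.2.1)

noncomputable def gmap (σ : Copies R K ι) (v : R.V) : VQ R K ι :=
  if h : R.part v ∈ K then Sum.inl (σ.1 ⟨v, h⟩) else Sum.inr (σ, ⟨v, h⟩)

noncomputable def EQ : Finset (Finset (VQ R K ι)) :=
  (ED' R K ι).image (Finset.image Sum.inl) ∪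
    Finset.univ.biUnion fun σ : Copies R K ι =>
      (R.E.filter fun e => R.pset e ≠ K).image (Finset.image (gmap R K ι σ))

lemma edgeOf_spec (hK : K.card = k) {d} (hd : d ∈ ED' R K ι) :
    d.card = k ∧ Set.InjOn (fun x : VD R ι => x.1.1) d := by
  obtain ⟨w, -, rfl⟩ := mem_image.1 hd
  constructor
  · rw [edgeOf, card_image_of_injOn, card_attach, hK]
    intro a _ b _ hab
    have h2 : a.1 = b.1 := by
      have h3 := congrArg (fun x : VD R ι => x.1.1) hab
      simpa using h3
    exact Subtype.ext h2
  · intro x hx y hy hxy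
    obtain ⟨i, -, rfl⟩ := mem_image.1 hx
    obtain ⟨i', -, rfl⟩ := mem_image.1 hy
    simp only [vtx_fst] at hxy
    have : i = i' := Subtype.ext hxy
    rw [this]

lemma gmap_inj (σ : Copies R K ι) : Function.Injective (gmap R K ι σ) := by
  intro u v huv
  unfold gmap at huv
  by_cases hu : R.part u ∈ K <;> by_cases hv : R.part v ∈ K <;>
    simp only [dif_pos, dif_neg, hu, hv] at huv
  · exact congrArg Subtype.val (σ.2.1 (Sum.inl.inj huv))
  · simp at huv
  · simp at huv
  · exact congrArg Subtype.val (congrArg Prod.snd (Sum.inr.inj huv))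

lemma gmap_part (σ : Copies R K ι) (v : R.V) : partQ R K ι (gmap R K ι σ v) = R.part v := by
  unfold gmap
  by_cases h : R.part v ∈ K
  · rw [dif_pos h]; exact σ.2.2.1 ⟨v, h⟩
  · rw [dif_neg h]; rfl

lemma gmap_lift (σ : Copies R K ι) (s : Finset R.V) (hs : ∀ v ∈ s, R.part v ∈ K) :
    s.image (gmap R K ι σ) = ((lift R K s hs).image σ.1).image Sum.inl := by
  rw [lift, image_image, image_image]
  conv_lhs => rw [← Finset.attach_image_val (s := s), image_image]
  refine image_congr ?_
  intro v _
  simp only [Function.comp_apply, gmap, dif_pos (hs v.1 v.2)]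

noncomputable abbrev QSys (hK : K.card = k) : Sys T k where
  V := VQ R K ι
  part := partQ R K ι
  E := EQ R K ι
  uni := by
    intro e he
    rcases mem_union.1 he with h | h
    · obtain ⟨d, hd, rfl⟩ := mem_image.1 h
      rw [card_image_of_injective _ Sum.inl_injective]
      exact (edgeOf_spec R K ι hK hd).1
    · obtain ⟨σ, -, h⟩ := mem_biUnion.1 h
      obtain ⟨e₀, he₀, rfl⟩ := mem_image.1 h
      rw [card_image_of_injective _ (gmap_inj R K ι σ)]
      exact R.uni e₀ (mem_filter.1 he₀).1
  pinj := by
    intro e he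
    rcases mem_union.1 he with h | h
    · obtain ⟨d, hd, rfl⟩ := mem_image.1 h
      intro x hx y hy hxy
      obtain ⟨a, ha, rfl⟩ := mem_image.1 (mem_coe.1 hx)
      obtain ⟨b, hb, rfl⟩ := mem_image.1 (mem_coe.1 hy)
      rw [(edgeOf_spec R K ι hK hd).2 ha hb hxy]
    · obtain ⟨σ, -, h⟩ := mem_biUnion.1 h
      obtain ⟨e₀, he₀, rfl⟩ := mem_image.1 h
      intro x hx y hy hxy
      obtain ⟨a, ha, rfl⟩ := mem_image.1 (mem_coe.1 hx)
      obtain ⟨b, hb, rfl⟩ := mem_image.1 (mem_coe.1 hy)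
      rw [gmap_part, gmap_part] at hxy
      rw [R.pinj e₀ (mem_filter.1 he₀).1 ha hb hxy]

noncomputable def gmapEmb (hK : K.card = k) (σ : Copies R K ι) : Emb R (QSys R K ι hK) where
  f := gmap R K ι σ
  inj := gmap_inj R K ι σ
  hpart := gmap_part R K ι σ
  ind := by
    intro s
    constructor
    · intro hsE
      by_cases hpe : R.pset s = K
      · have hsub : ∀ v ∈ s, R.part v ∈ K := part_in_K R K hpe
        rw [show (QSys R K ι hK).E = EQ R K ι from rfl, gmap_lift R K ι σ s hsub]
        have h1 : (lift R K s hsub).image Subtype.val ∈ R.E := by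
          rw [lift_val]; exact hsE
        have h2 := (σ.2.2.2 (lift R K s hsub)).1 h1
        exact mem_union_left _ (mem_image.2 ⟨_, h2, rfl⟩)
      · exact mem_union_right _ (mem_biUnion.2 ⟨σ, mem_univ _,
          mem_image.2 ⟨s, mem_filter.2 ⟨hsE, hpe⟩, rfl⟩⟩)
    · intro h
      rcases mem_union.1 h with h | h
      · obtain ⟨d, hd, hdeq⟩ := mem_image.1 h
        have hsub : ∀ v ∈ s, R.part v ∈ K := by
          intro v hv
          by_contra hvK
          have hmem : (Sum.inr (σ, ⟨v, hvK⟩) : VQ R K ι) ∈ d.image Sum.inl := by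
            rw [hdeq]
            exact mem_image.2 ⟨v, hv, by simp only [gmap, dif_neg hvK]⟩
          obtain ⟨x, -, hx⟩ := mem_image.1 hmem
          exact Sum.inl_ne_inr hx
        have hd2 : d = (lift R K s hsub).image σ.1 :=
          Finset.image_injective Sum.inl_injective
            (by rw [hdeq, gmap_lift R K ι σ s hsub])
        have h2 := (σ.2.2.2 (lift R K s hsub)).2 (by rw [← hd2]; exact hd)
        rwa [lift_val] at h2
      · obtain ⟨σ', -, h⟩ := mem_biUnion.1 h
        obtain ⟨e₀, he₀, heq⟩ := mem_image.1 h
        have he₀E : e₀ ∈ R.E := (mem_filter.1 he₀).1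
        have he₀ne : R.pset e₀ ≠ K := (mem_filter.1 he₀).2
        obtain ⟨v₀, hv₀, hv₀K⟩ := exists_notin R K hK he₀E he₀ne
        have hmem : (Sum.inr (σ', ⟨v₀, hv₀K⟩) : VQ R K ι) ∈ s.image (gmap R K ι σ) := by
          rw [← heq]
          exact mem_image.2 ⟨v₀, hv₀, by simp only [gmap, dif_neg hv₀K]⟩
        obtain ⟨u, hu, hux⟩ := mem_image.1 hmem
        have hσ : σ' = σ := by
          by_cases h' : R.part u ∈ K
          · rw [gmap, dif_pos h'] at hux
            exact (Sum.inl_ne_inr hux).elim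
          · rw [gmap, dif_neg h'] at hux
            exact (congrArg Prod.fst (Sum.inr.inj hux)).symm
        subst hσ
        have := Finset.image_injective (gmap_inj R K ι σ') heq
        rwa [← this]

noncomputable def sigl (l : Combinatorics.Line {e // e ∈ ED R K} ι) : KV R K → VD R ι :=
  fun v =>
    ⟨(R.part v.1, fun j => (l.idxFun j).elim v.1 (fun a => pick R K a.1 a.2 (R.part v.1) v.2)),
     by
      intro j
      cases h : l.idxFun j with
      | none => simp [h]
      | some a => simp [h, pick_part]⟩

lemma sigl_apply_none {l : Combinatorics.Line {e // e ∈ ED R K} ι} {j : ι}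
    (hj : l.idxFun j = none) (v : KV R K) : (sigl R K ι l v).1.2 j = v.1 := by
  simp [sigl, hj]

lemma sigl_edge (l : Combinatorics.Line {e // e ∈ ED R K} ι) {e} (he : e ∈ ED R K)
    {s : Finset (KV R K)} (hs : s.image Subtype.val = e) :
    s.image (sigl R K ι l) = edgeOf R K ι (fun j => (l.idxFun j).getD ⟨e, he⟩) := by
  set w : ι → {e // e ∈ ED R K} := fun j => (l.idxFun j).getD ⟨e, he⟩ with hw
  have key : ∀ v ∈ s, sigl R K ι l v = vtx R K ι w (R.part v.1) v.2 := by
    intro v hv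
    have hve : v.1 ∈ e := by rw [← hs]; exact mem_image_of_mem _ hv
    simp only [sigl, vtx, Subtype.mk.injEq, Prod.mk.injEq, true_and]
    refine funext fun j => ?_
    cases h : l.idxFun j with
    | some a => simp [hw, h]
    | none =>
      simp only [hw, h, Option.elim_none, Option.getD_none]
      exact (pick_eq R K e he _ v.2 hve rfl).symm
  apply subset_antisymm
  · intro x hx
    obtain ⟨v, hv, rfl⟩ := mem_image.1 hx
    rw [key v hv]
    exact mem_image.2 ⟨⟨R.part v.1, v.2⟩, mem_attach _ _, rfl⟩
  · intro x hx
    obtain ⟨i, -, rfl⟩ := mem_image.1 hx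
    have hpm : pick R K e he i.1 i.2 ∈ s.image Subtype.val := by
      rw [hs]; exact pick_mem R K e he i.1 i.2
    obtain ⟨v, hv, hveq⟩ := mem_image.1 hpm
    refine mem_image.2 ⟨v, hv, ?_⟩
    rw [key v hv]
    obtain ⟨i1, i2⟩ := i
    have hpv : R.part v.1 = i1 := by rw [hveq, pick_part]
    subst hpv
    rfl

lemma sigl_copy (hK : K.card = k) (l : Combinatorics.Line {e // e ∈ ED R K} ι) :
    IsCopy R K ι (sigl R K ι l) := by
  obtain ⟨j₀, hj₀⟩ := l.proper
  refine ⟨?_, fun v => rfl, ?_⟩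
  · intro u v huv
    have h2 := congrArg (fun x : VD R ι => x.1.2 j₀) huv
    simp only [sigl_apply_none R K ι hj₀] at h2
    exact Subtype.ext h2
  · intro s
    constructor
    · intro hsE
      have hsub : ∀ v ∈ s.image Subtype.val, R.part v ∈ K := by
        intro v hv
        obtain ⟨u, hu, rfl⟩ := mem_image.1 hv
        exact u.2
      have he : s.image Subtype.val ∈ ED R K :=
        mem_filter.2 ⟨hsE, pset_eq_K R K hK hsE hsub⟩
      rw [sigl_edge R K ι l he rfl]
      exact mem_image.2 ⟨_, mem_univ _, rfl⟩
    · intro h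
      obtain ⟨w, -, hw⟩ := mem_image.1 h
      have h2 := congrArg (Finset.image (fun p : VD R ι => p.1.2 j₀)) hw
      rw [edgeOf, image_image, image_image] at h2
      have h3 : K.attach.image
          ((fun p : VD R ι => p.1.2 j₀) ∘ fun i => vtx R K ι w i.1 i.2)
          = (w j₀).1 := pick_attach R K (w j₀).1 (w j₀).2
      have h4 : s.image ((fun p : VD R ι => p.1.2 j₀) ∘ sigl R K ι l)
          = s.image Subtype.val := by
        refine image_congr ?_
        intro v _
        exact sigl_apply_none R K ι hj₀ v
      rw [h3, h4] at h2
      rw [← h2]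
      exact (ED_mem R K ((w j₀).2)).1

end Step

lemma step {q : ℕ} (R : Sys T k) (K : Finset (Fin T)) (hq : 0 < q) (hK : K.card = k) :
    ∃ Q : Sys T k, ∀ χ : Finset Q.V → Fin q, ∃ (g : Emb R Q) (c : Fin q),
      ∀ e ∈ R.E, R.pset e = K → χ (e.image g.f) = c := by
  by_cases hED : ED R K = ∅
  · refine ⟨R, fun χ => ⟨Emb.ide R, ⟨0, hq⟩, fun e heE hpe => ?_⟩⟩
    have hmem : e ∈ ED R K := by rw [ED, mem_filter]; exact ⟨heE, hpe⟩
    rw [hED] at hmem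
    exact absurd hmem (notMem_empty e)
  · obtain ⟨ι, ιfin, hHJ⟩ :=
      Combinatorics.Line.exists_mono_in_high_dimension {e // e ∈ ED R K} (Fin q)
    haveI := ιfin
    haveI : DecidableEq ι := Classical.decEq ι
    refine ⟨QSys R K ι hK, fun χ => ?_⟩
    obtain ⟨l, c, hcl⟩ := hHJ fun w => χ ((edgeOf R K ι w).image Sum.inl)
    set σ : Copies R K ι := ⟨sigl R K ι l, sigl_copy R K ι hK l⟩ with hσ
    refine ⟨gmapEmb R K ι hK σ, c, fun e heE hpe => ?_⟩
    have he : e ∈ ED R K := mem_filter.2 ⟨heE, hpe⟩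
    have hsub : ∀ v ∈ e, R.part v ∈ K := part_in_K R K hpe
    have hf : (gmapEmb R K ι hK σ).f = gmap R K ι σ := rfl
    rw [hf, gmap_lift R K ι σ e hsub, sigl_edge R K ι l he (lift_val R K e hsub)]
    exact hcl ⟨e, he⟩

lemma iter {T k q : ℕ} (hq : 0 < q) :
    ∀ L : List (Finset (Fin T)), (∀ K ∈ L, K.card = k) → ∀ P : Sys T k,
      ∃ Q : Sys T k, ∀ χ : Finset Q.V → Fin q,
        ∃ (f : Emb P Q) (c : Finset (Fin T) → Fin q),
          ∀ e ∈ P.E, P.pset e ∈ L → χ (e.image f.f) = c (P.pset e) := by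
  intro L
  induction L with
  | nil =>
    intro _ P
    exact ⟨P, fun χ => ⟨Emb.ide P, fun _ => ⟨0, hq⟩,
      fun e he h => absurd h List.not_mem_nil⟩⟩
  | cons K L ihl =>
    intro hL P
    obtain ⟨Q', hQ'⟩ := ihl (fun K' hK' => hL K' (List.mem_cons_of_mem _ hK')) P
    obtain ⟨Q, hQ⟩ := step Q' K hq (hL K List.mem_cons_self)
    refine ⟨Q, fun χ => ?_⟩
    obtain ⟨g, cK, hg⟩ := hQ χ
    obtain ⟨f, c, hf⟩ := hQ' (fun s => χ (s.image g.f))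
    refine ⟨g.comp f, Function.update c K cK, fun e heE hmem => ?_⟩
    have himg : e.image (Emb.comp g f).f = (e.image f.f).image g.f := by
      rw [image_image]; rfl
    by_cases hcase : P.pset e = K
    · rw [himg, hcase, Function.update_self]
      have heQ' : e.image f.f ∈ Q'.E := (f.ind e).1 heE
      have hps : Q'.pset (e.image f.f) = K := by rw [f.pset_image, hcase]
      exact hg _ heQ' hps
    · rw [himg, Function.update_of_ne hcase]
      have hmem' : P.pset e ∈ L := by
        rcases List.mem_cons.1 hmem with h | h
        · exact absurd h hcase
        · exact h
      exact hf e heE hmem'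

noncomputable abbrev P0 (T k t : ℕ) (F : Finset (Finset (Fin t)))
    (hF : ∀ e ∈ F, e.card = k) : Sys T k where
  V := {S : Finset (Fin T) // S.card = t} × Fin t
  part := fun p => p.1.1.orderEmbOfFin p.1.2 p.2
  E := Finset.univ.biUnion fun S : {S : Finset (Fin T) // S.card = t} =>
    F.image fun e => e.image fun i => (S, i)
  uni := by
    intro e he
    simp only [mem_biUnion, mem_image] at he
    obtain ⟨S, -, e₀, he₀, rfl⟩ := he
    rw [card_image_of_injective _ (fun a b h => congrArg Prod.snd h)]
    exact hF e₀ he₀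
  pinj := by
    intro e he
    simp only [mem_biUnion, mem_image] at he
    obtain ⟨S, -, e₀, he₀, rfl⟩ := he
    intro x hx y hy hxy
    obtain ⟨a, ha, rfl⟩ := mem_image.1 (mem_coe.1 hx)
    obtain ⟨b, hb, rfl⟩ := mem_image.1 (mem_coe.1 hy)
    have hab : a = b := (S.1.orderEmbOfFin S.2).injective hxy
    rw [hab]

lemma P0_copy (T k t : ℕ) (F : Finset (Finset (Fin t))) (hF : ∀ e ∈ F, e.card = k)
    (hk : 0 < k) (S : {S : Finset (Fin T) // S.card = t}) (s : Finset (Fin t)) :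
    s ∈ F ↔ s.image (fun i => ((S, i) : (P0 T k t F hF).V)) ∈ (P0 T k t F hF).E := by
  constructor
  · intro h
    exact mem_biUnion.2 ⟨S, mem_univ _, mem_image.2 ⟨s, h, rfl⟩⟩
  · intro h
    obtain ⟨S', -, h⟩ := mem_biUnion.1 h
    obtain ⟨e₀, he₀, heq⟩ := mem_image.1 h
    have he₀ne : e₀.Nonempty := card_pos.1 (by rw [hF e₀ he₀]; omega)
    obtain ⟨i₀, hi₀⟩ := he₀ne
    have hmem : ((S', i₀) : (P0 T k t F hF).V) ∈ s.image (fun i => ((S, i) :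
        (P0 T k t F hF).V)) := by
      rw [← heq]; exact mem_image_of_mem _ hi₀
    obtain ⟨i, -, hi⟩ := mem_image.1 hmem
    have hSS : S = S' := congrArg Prod.fst hi
    subst hSS
    have he : e₀ = s := Finset.image_injective (fun a b h' => congrArg Prod.snd h') heq
    rwa [← he]

lemma P0_pset (T k t : ℕ) (F : Finset (Finset (Fin t))) (hF : ∀ e ∈ F, e.card = k)
    (S : {S : Finset (Fin T) // S.card = t}) (e : Finset (Fin t)) :
    (P0 T k t F hF).pset (e.image fun i => ((S, i) : (P0 T k t F hF).V))
      = e.image (S.1.orderEmbOfFin S.2) := by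
  rw [Sys.pset, image_image]
  rfl

end IndRam

/-- For every `k ≥ 2`, every finite `k`-uniform hypergraph `F`
and every `q ≥ 2`, there exists a finite `k`-uniform hypergraph `G` such that
every `q`-coloring of the edges of `G` contains an induced monochromatic copy of
`F`; i.e. the induced Ramsey number `r_ind(F;q)` is finite. -/
theorem induced_ramsey_exists (k q t : ℕ) (hk : 2 ≤ k) (hq : 2 ≤ q)
    (F : Finset (Finset (Fin t))) (hF : IsKUniform k F) :
    ∃ (n : ℕ) (G : Finset (Finset (Fin n))), IsKUniform k G ∧
      ∀ χ : Finset (Fin n) → Fin q, HasIndMonoCopy k F G χ := by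
  classical
  by_cases hFe : F = ∅
  · subst hFe
    refine ⟨t, ∅, fun e he => absurd he (notMem_empty e), fun χ => ?_⟩
    exact ⟨id, ⟨0, by omega⟩, fun a b h => h, fun s hs => by simp,
      fun e he => absurd he (notMem_empty e)⟩
  · have hk1 : 1 ≤ k := by omega
    have hq0 : 0 < q := by omega
    obtain ⟨T, hT0, hram⟩ := IndRam.ramseyFin k q t hk1 hq0
    set L := ((Finset.univ : Finset (Fin T)).powersetCard k).toList with hLdef
    have hL : ∀ K ∈ L, K.card = k := by
      intro K hK
      exact Finset.mem_powersetCard_univ.1 (Finset.mem_toList.1 hK)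
    obtain ⟨Q, hQ⟩ := IndRam.iter hq0 L hL (IndRam.P0 T k t F hF)
    set n := Fintype.card Q.V with hn
    set ε := Fintype.equivFin Q.V with hε
    refine ⟨n, Q.E.image (fun d => d.image ε), ?_, ?_⟩
    · intro e he
      obtain ⟨d, hd, rfl⟩ := mem_image.1 he
      rw [card_image_of_injective _ ε.injective]
      exact Q.uni d hd
    · intro χ
      obtain ⟨f, c, hf⟩ := hQ (fun s => χ (s.image ε))
      obtain ⟨S, cstar, hScard, hmono⟩ := hram c
      set cS : Fin t → (IndRam.P0 T k t F hF).V := fun i => (⟨S, hScard⟩, i) with hcS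
      refine ⟨fun i => ε (f.f (cS i)), cstar, ?_, ?_, ?_⟩
      · exact ε.injective.comp (f.inj.comp (fun a b h => congrArg Prod.snd h))
      · intro s hs
        rw [IndRam.P0_copy T k t F hF (by omega) ⟨S, hScard⟩ s, f.ind]
        constructor
        · intro h
          refine mem_image.2 ⟨_, h, ?_⟩
          rw [image_image, image_image]
          rfl
        · intro h
          obtain ⟨d, hd, hdeq⟩ := mem_image.1 h
          have hdd : d = (s.image cS).image f.f := by
            apply Finset.image_injective ε.injective
            rw [hdeq, image_image, image_image]
            rfl
          exact hdd ▸ hd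
      · intro e he
        have heE : e.image cS ∈ (IndRam.P0 T k t F hF).E :=
          (IndRam.P0_copy T k t F hF (by omega) ⟨S, hScard⟩ e).1 he
        have hpmem : (IndRam.P0 T k t F hF).pset (e.image cS) ∈ L := by
          rw [IndRam.P0_pset (hF := hF)]
          refine Finset.mem_toList.2 (Finset.mem_powersetCard_univ.2 ?_)
          rw [card_image_of_injective _ (S.orderEmbOfFin hScard).injective]
          exact hF e he
        have h1 := hf (e.image cS) heE hpmem
        have h2 : c ((IndRam.P0 T k t F hF).pset (e.image cS)) = cstar := by
          rw [IndRam.P0_pset (hF := hF)]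
          refine hmono _ ?_ ?_
          · intro x hx
            obtain ⟨i, hi, rfl⟩ := mem_image.1 hx
            exact Finset.orderEmbOfFin_mem S hScard i
          · rw [card_image_of_injective _ (S.orderEmbOfFin hScard).injective]
            exact hF e he
        have h3 : e.image (fun i => ε (f.f (cS i))) = ((e.image cS).image f.f).image ε := by
          rw [image_image, image_image]
          rfl
        rw [h3]
        exact h1.trans h2
end

section
/- Let k ≥ 2 and let F be a k-uniform hypergraph with t vertices and ℓ ≥ 2 (distinct) edges, let n ≥ t, let H = H(F,n) be the auxiliary ℓ-uniform hypergraph of copies of F in [n], and set τ = n^{−1/(2ℓ)}. Then the codegree function satisfies δ(H,τ) ≤ 2^{binom(ℓ,2)} · t^t · n^{−1/2}. -/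
open Finset
open scoped Classical

/-- The vertex set of the auxiliary hypergraph `H(F,n)`: all `k`-element
subsets of `[n] = {0, …, n-1}`. -/
def auxVerts (k n : ℕ) : Finset (Finset ℕ) :=
  (Finset.range n).powersetCard k

/-- `E` forms a copy of `F`: there is a bijection from `V(F)` to `⋃_{e ∈ E} e`
mapping the edge set of `F` onto `E`. -/
def IsCopyEdge {t : ℕ} (F : Finset (Finset (Fin t))) (E : Finset (Finset ℕ)) : Prop :=
  ∃ f : Fin t → ℕ, Function.Injective f ∧
    Finset.univ.image f = E.sup id ∧ F.image (fun e => e.image f) = E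

/-- The edge set of the auxiliary `ℓ`-uniform hypergraph `H(F,n)`: all
`ℓ`-element subsets of `V(H)` that form a copy of `F`, where `ℓ = e(F)`. -/
noncomputable def auxEdges (k n : ℕ) {t : ℕ} (F : Finset (Finset (Fin t))) :
    Finset (Finset (Finset ℕ)) :=
  ((auxVerts k n).powerset).filter fun E => E.card = F.card ∧ IsCopyEdge F E

/-- The degree of a set `σ` of vertices in the hypergraph with edge set `H`:
the number of edges containing `σ`. -/
noncomputable def degSet {α : Type*} (H : Finset (Finset α)) (σ : Finset α) : ℕ :=
  (H.filter fun e => σ ⊆ e).card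

/-- The average degree of the hypergraph with vertex set `V` and edge set `H`. -/
noncomputable def avgDeg {α : Type*} (V : Finset α) (H : Finset (Finset α)) : ℝ :=
  (∑ v ∈ V, (degSet H {v} : ℝ)) / V.card

/-- `d^{(j)}(v)`: the maximum degree `d(σ)` over sets `σ ⊆ V` with `v ∈ σ` and
`|σ| = j`. -/
noncomputable def maxDeg {α : Type*} (V : Finset α) (H : Finset (Finset α))
    (j : ℕ) (v : α) : ℕ :=
  ((V.powersetCard j).filter fun σ => v ∈ σ).sup (degSet H)

/-- `δ_j`, defined by `δ_j τ^{j-1} N d = ∑_{v} d^{(j)}(v)`. -/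
noncomputable def deltaJ {α : Type*} (V : Finset α) (H : Finset (Finset α))
    (τ : ℝ) (j : ℕ) : ℝ :=
  (∑ v ∈ V, (maxDeg V H j v : ℝ)) / (τ ^ (j - 1) * V.card * avgDeg V H)

/-- The codegree function `δ(H,τ)` of an `ℓ`-uniform hypergraph with vertex set
`V` and edge set `H` (equal to `0` if the average degree vanishes). -/
noncomputable def codegFn {α : Type*} (V : Finset α) (H : Finset (Finset α))
    (ℓ : ℕ) (τ : ℝ) : ℝ :=
  if avgDeg V H = 0 then 0
  else (2 : ℝ) ^ ((Nat.choose ℓ 2 : ℝ) - 1) *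
    ∑ j ∈ Finset.Icc 2 ℓ, (2 : ℝ) ^ (-(Nat.choose (j - 1) 2 : ℝ)) * deltaJ V H τ j


lemma descFactorial_split (n a b : ℕ) :
    n.descFactorial (a + b) = n.descFactorial a * (n - a).descFactorial b := by
  induction b with
  | zero => simp
  | succ b ih =>
    rw [← Nat.add_assoc, Nat.descFactorial_succ, ih, Nat.descFactorial_succ, Nat.sub_sub]
    ring

lemma pow_le_descFactorial (n t k : ℕ) (htn : t ≤ n) (ht1 : 1 ≤ t) :
    ∀ j, j + k ≤ t → n ^ j ≤ t ^ j * (n - k).descFactorial j := by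
  intro j
  induction j with
  | zero => simp
  | succ j ih =>
    intro hj
    have h1 : j + k ≤ t := by omega
    have h2 : n ≤ t * (n - k - j) := by
      have : n - t + 1 ≤ n - k - j := by omega
      calc n = (n - t) + t := by omega
        _ ≤ t * (n - t) + t * 1 := by
            have := Nat.mul_le_mul_right (n - t) ht1
            omega
        _ = t * (n - t + 1) := by ring
        _ ≤ t * (n - k - j) := Nat.mul_le_mul_left _ this
    calc n ^ (j + 1) = n ^ j * n := by ring
      _ ≤ (t ^ j * (n - k).descFactorial j) * (t * (n - k - j)) :=
          Nat.mul_le_mul (ih h1) h2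
      _ = t ^ (j + 1) * ((n - k - j) * (n - k).descFactorial j) := by ring
      _ = t ^ (j + 1) * (n - k).descFactorial (j + 1) := by
          rw [Nat.descFactorial_succ]

lemma master_ineq (k t ℓ n : ℕ) (hk : 2 ≤ k) (hkt : k + 1 ≤ t) (hn : t ≤ n)
    (htl : t ≤ k * ℓ) :
    n.choose k * (t.descFactorial (k + 1) * n ^ (t - k - 1)) * n
      ≤ ℓ * (n.descFactorial t * t ^ t) := by
  have ht1 : 1 ≤ t := by omega
  have hn1 : 1 ≤ n := by omega
  have e1 : n ^ (t - k - 1) * n = n ^ (t - k) := by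
    rw [← pow_succ]; congr 1; omega
  have e2 : n ^ (t - k) ≤ t ^ (t - k) * (n - k).descFactorial (t - k) :=
    pow_le_descFactorial n t k hn ht1 (t - k) (by omega)
  have e3 : t.descFactorial (k + 1) ≤ t ^ (k + 1) := Nat.descFactorial_le_pow t (k + 1)
  have e4 : n.descFactorial t = n.descFactorial k * (n - k).descFactorial (t - k) := by
    have : t = k + (t - k) := by omega
    rw [this, descFactorial_split]; congr 2 <;> omega
  have e5 : t ≤ ℓ * Nat.factorial k := by
    calc t ≤ k * ℓ := htl
      _ ≤ Nat.factorial k * ℓ := Nat.mul_le_mul_right ℓ (Nat.self_le_factorial k)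
      _ = ℓ * Nat.factorial k := by ring
  have e6 : t ^ (k + 1) * t ^ (t - k) = t * t ^ t := by
    rw [← pow_add]; rw [← pow_succ']; congr 1; omega
  calc n.choose k * (t.descFactorial (k + 1) * n ^ (t - k - 1)) * n
      = n.choose k * t.descFactorial (k + 1) * (n ^ (t - k - 1) * n) := by ring
    _ = n.choose k * t.descFactorial (k + 1) * n ^ (t - k) := by rw [e1]
    _ ≤ n.choose k * t ^ (k + 1) * (t ^ (t - k) * (n - k).descFactorial (t - k)) := by
        exact Nat.mul_le_mul (Nat.mul_le_mul_left _ e3) e2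
    _ = n.choose k * (t ^ (k + 1) * t ^ (t - k)) * (n - k).descFactorial (t - k) := by ring
    _ = n.choose k * (t * t ^ t) * (n - k).descFactorial (t - k) := by rw [e6]
    _ = (t * n.choose k) * (t ^ t * (n - k).descFactorial (t - k)) := by ring
    _ ≤ ((ℓ * Nat.factorial k) * n.choose k) * (t ^ t * (n - k).descFactorial (t - k)) := by
        exact Nat.mul_le_mul_right _ (Nat.mul_le_mul_right _ e5)
    _ = ℓ * ((Nat.factorial k * n.choose k) * (n - k).descFactorial (t - k) * t ^ t) := by ring
    _ = ℓ * (n.descFactorial t * t ^ t) := by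
        rw [← Nat.descFactorial_eq_factorial_mul_choose, ← e4]

lemma choose2_ge (m : ℕ) : m - 1 ≤ m.choose 2 := by
  match m with
  | 0 => simp
  | m + 1 =>
    rw [Nat.choose_succ_succ]
    have : m.choose 1 = m := Nat.choose_one_right m
    omega

lemma geom_half (m : ℕ) : ∑ i ∈ Finset.range m, ((2:ℝ)⁻¹) ^ i ≤ 2 := by
  have h : ∀ m : ℕ, ∑ i ∈ Finset.range m, ((2:ℝ)⁻¹) ^ i = 2 - 2 * (2⁻¹) ^ m := by
    intro m
    induction m with
    | zero => simp
    | succ m ih => rw [Finset.sum_range_succ, ih]; ring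
  rw [h]
  have : (0:ℝ) ≤ 2 * (2⁻¹) ^ m := by positivity
  linarith

lemma coeff_sum_le (ℓ : ℕ) (hℓ2 : 2 ≤ ℓ) :
    ∑ j ∈ Finset.Icc 2 ℓ, (2:ℝ) ^ (-(Nat.choose (j-1) 2 : ℝ)) ≤ 2 := by
  have step : ∀ j ∈ Finset.Icc 2 ℓ,
      (2:ℝ) ^ (-(Nat.choose (j-1) 2 : ℝ)) ≤ ((2:ℝ)⁻¹) ^ (j - 2) := by
    intro j _
    have h1 : ((j - 2 : ℕ) : ℝ) ≤ (Nat.choose (j-1) 2 : ℝ) := by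
      have := choose2_ge (j - 1)
      have : j - 2 ≤ Nat.choose (j-1) 2 := by omega
      exact_mod_cast this
    calc (2:ℝ) ^ (-(Nat.choose (j-1) 2 : ℝ)) ≤ (2:ℝ) ^ (-((j-2:ℕ) : ℝ)) :=
          Real.rpow_le_rpow_of_exponent_le one_le_two (by linarith)
      _ = ((2:ℝ)⁻¹) ^ (j - 2) := by
          rw [Real.rpow_neg (by norm_num), Real.rpow_natCast, ← inv_pow]
  calc ∑ j ∈ Finset.Icc 2 ℓ, (2:ℝ) ^ (-(Nat.choose (j-1) 2 : ℝ))
      ≤ ∑ j ∈ Finset.Icc 2 ℓ, ((2:ℝ)⁻¹) ^ (j - 2) := Finset.sum_le_sum step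
    _ = ∑ i ∈ Finset.range (ℓ - 1), ((2:ℝ)⁻¹) ^ i := by
        have hmap : Finset.Icc 2 ℓ = (Finset.range (ℓ - 1)).map
            ⟨fun i => i + 2, add_left_injective 2⟩ := by
          ext x
          simp only [Finset.mem_Icc, Finset.mem_map, Finset.mem_range,
            Function.Embedding.coeFn_mk]
          constructor
          · intro ⟨h1, h2⟩; exact ⟨x - 2, by omega, by omega⟩
          · rintro ⟨i, hi, rfl⟩; omega
        rw [hmap, Finset.sum_map]
        simp
    _ ≤ 2 := geom_half _


/-- image of a sup of finsets equals sup of images -/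
lemma image_sup_eq {α β : Type*} [DecidableEq α] [DecidableEq β] (f : α → β)
    (s : Finset (Finset α)) :
    (s.sup id).image f = s.sup (fun e => e.image f) := by
  ext x
  simp only [Finset.mem_image, Finset.mem_sup, id]
  constructor
  · rintro ⟨y, ⟨e, he, hy⟩, rfl⟩; exact ⟨e, he, y, hy, rfl⟩
  · rintro ⟨e, he, y, hy, rfl⟩
    exact ⟨y, ⟨e, he, hy⟩, rfl⟩

/-- from equal images, get a permutation relating two embeddings -/
lemma exists_perm {t n : ℕ} (φ φ₀ : Fin t ↪ Fin n)
    (h : Finset.univ.image φ = Finset.univ.image φ₀) :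
    ∃ g : Equiv.Perm (Fin t), ∀ i, φ i = φ₀ (g i) := by
  have hmem : ∀ i, ∃ j, φ₀ j = φ i := by
    intro i
    have : φ i ∈ Finset.univ.image φ₀ := by
      rw [← h]; exact Finset.mem_image_of_mem _ (Finset.mem_univ i)
    obtain ⟨j, _, hj⟩ := Finset.mem_image.1 this
    exact ⟨j, hj⟩
  choose g hg using hmem
  have hinj : Function.Injective g := by
    intro i j hij
    apply φ.injective
    rw [← hg i, ← hg j, hij]
  refine ⟨Equiv.ofBijective g (Finite.injective_iff_bijective.1 hinj), fun i => ?_⟩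
  exact (hg i).symm

/-- counting embeddings with prescribed values -/
lemma count_emb_le (t n u : ℕ) (w : Fin u → Fin n) :
    ((Finset.univ : Finset (Fin t ↪ Fin n)).filter
      (fun φ => ∃ g : Fin u ↪ Fin t, ∀ i, φ (g i) = w i)).card
      ≤ t.descFactorial u * n ^ (t - u) := by
  classical
  set P : (Fin u ↪ Fin t) → Finset (Fin t ↪ Fin n) :=
    fun g => (Finset.univ).filter (fun φ => ∀ i, φ (g i) = w i) with hP
  have hsub : ((Finset.univ : Finset (Fin t ↪ Fin n)).filter
      (fun φ => ∃ g : Fin u ↪ Fin t, ∀ i, φ (g i) = w i))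
      ⊆ (Finset.univ : Finset (Fin u ↪ Fin t)).biUnion P := by
    intro φ hφ
    obtain ⟨g, hg⟩ := (Finset.mem_filter.1 hφ).2
    exact Finset.mem_biUnion.2 ⟨g, Finset.mem_univ g, Finset.mem_filter.2 ⟨Finset.mem_univ _, hg⟩⟩
  have hcardP : ∀ g : Fin u ↪ Fin t, (P g).card ≤ n ^ (t - u) := by
    intro g
    have hcard1 : Fintype.card {j : Fin t // ¬ ∃ i, g i = j} = t - u := by
      have h1 : Fintype.card {j : Fin t // ∃ i, g i = j} = u := by
        have : {j : Fin t // ∃ i, g i = j} ≃ Set.range ⇑g := Equiv.refl _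
        rw [Fintype.card_congr this, ← Fintype.card_congr (Equiv.ofInjective ⇑g g.injective),
          Fintype.card_fin]
      rw [Fintype.card_subtype_compl, h1, Fintype.card_fin]
    have : (P g).card ≤ Fintype.card ({j : Fin t // ¬ ∃ i, g i = j} → Fin n) := by
      rw [← Finset.card_univ]
      apply Finset.card_le_card_of_injOn (fun φ => fun j => φ j.1)
      · intro _ _; exact Finset.mem_univ _
      · intro φ hφ ψ hψ hfun
        have hφ' := (Finset.mem_filter.1 hφ).2
        have hψ' := (Finset.mem_filter.1 hψ).2
        ext j
        by_cases hj : ∃ i, g i = j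
        · obtain ⟨i, rfl⟩ := hj
          rw [hφ' i, hψ' i]
        · exact congrArg Fin.val (congrFun hfun ⟨j, hj⟩)
    calc (P g).card ≤ Fintype.card ({j : Fin t // ¬ ∃ i, g i = j} → Fin n) := this
      _ = n ^ (t - u) := by rw [Fintype.card_fun, Fintype.card_fin, hcard1]
  calc ((Finset.univ : Finset (Fin t ↪ Fin n)).filter
        (fun φ => ∃ g : Fin u ↪ Fin t, ∀ i, φ (g i) = w i)).card
      ≤ ((Finset.univ : Finset (Fin u ↪ Fin t)).biUnion P).card := Finset.card_le_card hsub
    _ ≤ ∑ g : Fin u ↪ Fin t, (P g).card := Finset.card_biUnion_le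
    _ ≤ (Finset.univ : Finset (Fin u ↪ Fin t)).card • (n ^ (t - u)) :=
        Finset.sum_le_card_nsmul _ _ _ (fun g _ => hcardP g)
    _ = t.descFactorial u * n ^ (t - u) := by
        rw [smul_eq_mul, Finset.card_univ, Fintype.card_embedding_eq, Fintype.card_fin,
          Fintype.card_fin]

/-- double counting: sum of vertex degrees equals ℓ times number of edges -/
lemma sum_deg_eq {α : Type*} [DecidableEq α] (V : Finset α) (H : Finset (Finset α)) (ℓ : ℕ)
    (hcard : ∀ e ∈ H, e.card = ℓ) (hsub : ∀ e ∈ H, e ⊆ V) :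
    ∑ v ∈ V, degSet H {v} = ℓ * H.card := by
  have h1 : ∀ v, degSet H {v} = ∑ e ∈ H, if v ∈ e then 1 else 0 := by
    intro v
    rw [degSet, Finset.card_filter]
    exact Finset.sum_congr rfl (fun e _ => by simp [Finset.singleton_subset_iff])
  calc ∑ v ∈ V, degSet H {v} = ∑ v ∈ V, ∑ e ∈ H, if v ∈ e then 1 else 0 := by
        exact Finset.sum_congr rfl (fun v _ => h1 v)
    _ = ∑ e ∈ H, ∑ v ∈ V, if v ∈ e then 1 else 0 := Finset.sum_comm
    _ = ∑ e ∈ H, (V.filter (fun v => v ∈ e)).card := by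
        exact Finset.sum_congr rfl (fun e _ => (Finset.card_filter _ _).symm)
    _ = ∑ e ∈ H, e.card := by
        refine Finset.sum_congr rfl (fun e he => ?_)
        rw [Finset.filter_mem_eq_inter, Finset.inter_eq_right.2 (hsub e he)]
    _ = ∑ e ∈ H, ℓ := Finset.sum_congr rfl hcard
    _ = ℓ * H.card := by rw [Finset.sum_const, smul_eq_mul, Nat.mul_comm]

section main
variable {k t ℓ n : ℕ} {F : Finset (Finset (Fin t))}

/-- coercion of an embedding to a map into ℕ -/
def fc {t n : ℕ} (φ : Fin t ↪ Fin n) : Fin t → ℕ := fun i => (φ i : ℕ)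

lemma fc_inj (φ : Fin t ↪ Fin n) : Function.Injective (fc φ) :=
  Fin.val_injective.comp φ.injective

/-- the copy associated with an embedding -/
noncomputable def Phi {t : ℕ} (F : Finset (Finset (Fin t))) {n : ℕ} (φ : Fin t ↪ Fin n) :
    Finset (Finset ℕ) :=
  F.image (fun e => e.image (fc φ))

lemma mem_auxEdges_iff {E : Finset (Finset ℕ)} :
    E ∈ auxEdges k n F ↔ E ⊆ auxVerts k n ∧ E.card = F.card ∧ IsCopyEdge F E := by
  unfold auxEdges
  rw [Finset.mem_filter, Finset.mem_powerset]

lemma sup_Phi (cover : F.sup id = Finset.univ) (φ : Fin t ↪ Fin n) :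
    (Phi F φ).sup id = Finset.univ.image (fc φ) := by
  rw [Phi, Finset.sup_image]
  simp only [Function.id_comp]
  rw [← image_sup_eq (fc φ) F, cover]

lemma Phi_card (φ : Fin t ↪ Fin n) : (Phi F φ).card = F.card :=
  Finset.card_image_of_injective F (Finset.image_injective (fc_inj φ))

lemma Phi_subset (hF : IsKUniform k F) (φ : Fin t ↪ Fin n) : Phi F φ ⊆ auxVerts k n := by
  intro x hx
  obtain ⟨e, he, rfl⟩ := Finset.mem_image.1 hx
  rw [auxVerts, Finset.mem_powersetCard]
  constructor
  · intro y hy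
    obtain ⟨i, _, rfl⟩ := Finset.mem_image.1 hy
    exact Finset.mem_range.2 (φ i).isLt
  · rw [Finset.card_image_of_injective e (fc_inj φ), hF e he]

lemma Phi_mem (cover : F.sup id = Finset.univ) (hF : IsKUniform k F) (φ : Fin t ↪ Fin n) :
    Phi F φ ∈ auxEdges k n F := by
  rw [mem_auxEdges_iff]
  refine ⟨Phi_subset hF φ, Phi_card φ, fc φ, fc_inj φ, ?_, rfl⟩
  rw [sup_Phi cover φ]

lemma cover_of_mem {E : Finset (Finset ℕ)} (hE : E ∈ auxEdges k n F) :
    F.sup id = (Finset.univ : Finset (Fin t)) := by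
  obtain ⟨-, -, f, hf, hsup, himg⟩ := mem_auxEdges_iff.1 hE
  apply Finset.image_injective hf
  rw [image_sup_eq f F, hsup, ← himg, Finset.sup_image]
  simp only [Function.id_comp]

lemma exists_phi {E : Finset (Finset ℕ)} (hE : E ∈ auxEdges k n F) :
    ∃ φ : Fin t ↪ Fin n, Phi F φ = E := by
  obtain ⟨hsubV, -, f, hf, hsup, himg⟩ := mem_auxEdges_iff.1 hE
  have hlt : ∀ i, f i < n := by
    intro i
    have h1 : f i ∈ E.sup id := by
      rw [← hsup]; exact Finset.mem_image_of_mem f (Finset.mem_univ i)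
    obtain ⟨x, hx, hfx⟩ := Finset.mem_sup.1 h1
    have := hsubV hx
    rw [auxVerts, Finset.mem_powersetCard] at this
    exact Finset.mem_range.1 (this.1 hfx)
  refine ⟨⟨fun i => ⟨f i, hlt i⟩, fun i j hij => hf (congrArg Fin.val hij)⟩, ?_⟩
  rw [← himg, Phi]
  rfl

lemma Phi_comp (φ₀ : Fin t ↪ Fin n) (g : Equiv.Perm (Fin t)) :
    Phi F (g.toEmbedding.trans φ₀) =
      (F.image (fun e => e.image ⇑g)).image (fun e => e.image (fc φ₀)) := by
  rw [Phi, Finset.image_image]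
  congr 1
  funext e
  show e.image (fc (g.toEmbedding.trans φ₀)) = (e.image ⇑g).image (fc φ₀)
  rw [Finset.image_image]
  rfl

/-- number of edge-set automorphisms of `F` -/
noncomputable def permCount {t : ℕ} (F : Finset (Finset (Fin t))) : ℕ :=
  ((Finset.univ : Finset (Equiv.Perm (Fin t))).filter
    (fun g : Equiv.Perm (Fin t) => F.image (fun e => e.image ⇑g) = F)).card

lemma permCount_pos : 1 ≤ permCount F := by
  rw [permCount, Nat.succ_le_iff, Finset.card_pos]
  refine ⟨1, Finset.mem_filter.2 ⟨Finset.mem_univ _, ?_⟩⟩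
  simp [Equiv.Perm.coe_one, Finset.image_id]

lemma fiber_card {E : Finset (Finset ℕ)} (hE : E ∈ auxEdges k n F) :
    ((Finset.univ : Finset (Fin t ↪ Fin n)).filter (fun φ => Phi F φ = E)).card
      = permCount F := by
  have cover := cover_of_mem hE
  obtain ⟨φ₀, rfl⟩ := exists_phi hE
  have himg_inj : Function.Injective
      (fun (X : Finset (Finset (Fin t))) => X.image (fun e => e.image (fc φ₀))) :=
    Finset.image_injective (Finset.image_injective (fc_inj φ₀))
  symm
  refine Finset.card_bij (fun g _ => g.toEmbedding.trans φ₀) ?_ ?_ ?_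
  · intro g hg
    refine Finset.mem_filter.2 ⟨Finset.mem_univ _, ?_⟩
    rw [Phi_comp, (Finset.mem_filter.1 hg).2]
    rfl
  · intro g₁ _ g₂ _ h
    ext i
    exact congrArg Fin.val (φ₀.injective (congrFun (congrArg DFunLike.coe h) i))
  · intro φ hφ
    have hPhi : Phi F φ = Phi F φ₀ := (Finset.mem_filter.1 hφ).2
    have h1 : Finset.univ.image (fc φ) = Finset.univ.image (fc φ₀) := by
      rw [← sup_Phi cover φ, ← sup_Phi cover φ₀, hPhi]
    have h2 : Finset.univ.image ⇑φ = Finset.univ.image ⇑φ₀ := by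
      apply Finset.image_injective (Fin.val_injective)
      rw [Finset.image_image, Finset.image_image]
      exact h1
    obtain ⟨g, hg⟩ := exists_perm φ φ₀ h2
    have heq : g.toEmbedding.trans φ₀ = φ := by
      ext i
      exact congrArg Fin.val (hg i).symm
    refine ⟨g, Finset.mem_filter.2 ⟨Finset.mem_univ _, ?_⟩, heq⟩
    apply himg_inj
    show (F.image (fun e => e.image ⇑g)).image (fun e => e.image (fc φ₀))
      = F.image (fun e => e.image (fc φ₀))
    rw [← Phi_comp, heq, hPhi]
    rfl

lemma card_H_eq (cover : F.sup id = Finset.univ) (hF : IsKUniform k F) :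
    permCount F * (auxEdges k n F).card = n.descFactorial t := by
  have h := Finset.card_eq_sum_card_fiberwise
    (f := fun φ : Fin t ↪ Fin n => Phi F φ) (s := Finset.univ) (t := auxEdges k n F)
    (fun φ _ => Phi_mem cover hF φ)
  rw [Finset.card_univ, Fintype.card_embedding_eq, Fintype.card_fin, Fintype.card_fin] at h
  calc permCount F * (auxEdges k n F).card
      = ∑ _E ∈ auxEdges k n F, permCount F := by
        rw [Finset.sum_const, smul_eq_mul, Nat.mul_comm]
    _ = ∑ E ∈ auxEdges k n F,
        ((Finset.univ : Finset (Fin t ↪ Fin n)).filter (fun φ => Phi F φ = E)).card :=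
        (Finset.sum_congr rfl (fun E hE => fiber_card hE)).symm
    _ = n.descFactorial t := h.symm


lemma deg_count (hF : IsKUniform k F) (cover : F.sup id = Finset.univ)
    (σ : Finset (Finset ℕ)) (hσ2 : 2 ≤ σ.card) (hσV : σ ⊆ auxVerts k n) :
    permCount F * degSet (auxEdges k n F) σ ≤ t.descFactorial (k+1) * n ^ (t - (k+1)) := by
  obtain ⟨x, hxσ, y, hyσ, hxy⟩ := Finset.one_lt_card.1 (by omega : 1 < σ.card)
  have hx := hσV hxσ
  have hy := hσV hyσ
  rw [auxVerts, Finset.mem_powersetCard] at hx hy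
  have hcard : k + 1 ≤ (x ∪ y).card := by
    by_contra hcon
    push_neg at hcon
    have h1 : x = x ∪ y := Finset.eq_of_subset_of_card_le Finset.subset_union_left
      (by omega)
    have h2 : y = x ∪ y := Finset.eq_of_subset_of_card_le Finset.subset_union_right
      (by omega)
    exact hxy (h1.trans h2.symm)
  obtain ⟨U', hU'sub, hU'card⟩ := Finset.exists_subset_card_eq hcard
  have hU'n : ∀ a ∈ U', a < n := by
    intro a ha
    rcases Finset.mem_union.1 (hU'sub ha) with h | h
    · exact Finset.mem_range.1 (hx.1 h)
    · exact Finset.mem_range.1 (hy.1 h)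
  set w : Fin (k+1) → Fin n := fun i =>
    ⟨(U'.orderIsoOfFin hU'card i : ℕ), hU'n _ (U'.orderIsoOfFin hU'card i).2⟩ with hw
  have hwinj : Function.Injective w := by
    intro i j hij
    have : (U'.orderIsoOfFin hU'card i : ℕ) = (U'.orderIsoOfFin hU'card j : ℕ) :=
      congrArg Fin.val hij
    exact (U'.orderIsoOfFin hU'card).injective (Subtype.ext this)
  have key : ∀ φ : Fin t ↪ Fin n, σ ⊆ Phi F φ →
      ∃ g : Fin (k+1) ↪ Fin t, ∀ i, φ (g i) = w i := by
    intro φ hσφ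
    have hU'img : U' ⊆ Finset.univ.image (fc φ) := by
      have hxs : x ∪ y ⊆ σ.sup id :=
        Finset.union_subset (Finset.le_sup (f := id) hxσ) (Finset.le_sup (f := id) hyσ)
      have hsup : σ.sup id ⊆ (Phi F φ).sup id := Finset.sup_mono hσφ
      rw [sup_Phi cover φ] at hsup
      exact fun a ha => hsup (hxs (hU'sub ha))
    have hmem : ∀ i : Fin (k+1), ∃ j, fc φ j = (w i : ℕ) := by
      intro i
      have : (w i : ℕ) ∈ Finset.univ.image (fc φ) :=
        hU'img (U'.orderIsoOfFin hU'card i).2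
      obtain ⟨j, _, hj⟩ := Finset.mem_image.1 this
      exact ⟨j, hj⟩
    choose g0 hg0 using hmem
    have hg0inj : Function.Injective g0 := by
      intro i j hij
      apply hwinj
      apply Fin.val_injective
      rw [← hg0 i, ← hg0 j, hij]
    exact ⟨⟨g0, hg0inj⟩, fun i => Fin.val_injective (hg0 i)⟩
  have step1 : permCount F * degSet (auxEdges k n F) σ =
      ((Finset.univ : Finset (Fin t ↪ Fin n)).filter (fun φ => σ ⊆ Phi F φ)).card := by
    have hfib := Finset.card_eq_sum_card_fiberwise
      (f := fun φ : Fin t ↪ Fin n => Phi F φ)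
      (s := (Finset.univ : Finset (Fin t ↪ Fin n)).filter (fun φ => σ ⊆ Phi F φ))
      (t := (auxEdges k n F).filter (fun E => σ ⊆ E))
      (fun φ hφ => Finset.mem_filter.2
        ⟨Phi_mem cover hF φ, (Finset.mem_filter.1 hφ).2⟩)
    rw [hfib]
    have hcongr : ∀ E ∈ (auxEdges k n F).filter (fun E => σ ⊆ E),
        ((((Finset.univ : Finset (Fin t ↪ Fin n)).filter
          (fun φ => σ ⊆ Phi F φ)).filter (fun φ => Phi F φ = E)).card) = permCount F := by
      intro E hE
      have hE1 := Finset.mem_filter.1 hE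
      have : (((Finset.univ : Finset (Fin t ↪ Fin n)).filter
          (fun φ => σ ⊆ Phi F φ)).filter (fun φ => Phi F φ = E)) =
          ((Finset.univ : Finset (Fin t ↪ Fin n)).filter (fun φ => Phi F φ = E)) := by
        rw [Finset.filter_filter]
        apply Finset.filter_congr
        intro φ _
        constructor
        · exact fun h => h.2
        · exact fun h => ⟨h ▸ hE1.2, h⟩
      rw [this]
      exact fiber_card hE1.1
    rw [Finset.sum_congr rfl hcongr, Finset.sum_const, smul_eq_mul, Nat.mul_comm]
    simp only [degSet]
    congr
  have step2 : ((Finset.univ : Finset (Fin t ↪ Fin n)).filter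
      (fun φ => σ ⊆ Phi F φ)).card ≤
      ((Finset.univ : Finset (Fin t ↪ Fin n)).filter
        (fun φ => ∃ g : Fin (k+1) ↪ Fin t, ∀ i, φ (g i) = w i)).card := by
    apply Finset.card_le_card
    intro φ hφ
    exact Finset.mem_filter.2 ⟨Finset.mem_univ _, key φ (Finset.mem_filter.1 hφ).2⟩
  rw [step1]
  exact le_trans step2 (count_emb_le t n (k+1) w)

end main

lemma sup_mul_le {β : Type*} (a B : ℕ) (s : Finset β) (f : β → ℕ)
    (h : ∀ σ ∈ s, a * f σ ≤ B) : a * s.sup f ≤ B := by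
  rcases s.eq_empty_or_nonempty with rfl | hne
  · simp
  · obtain ⟨σ, hσ, hsup⟩ := Finset.exists_mem_eq_sup s hne f
    rw [hsup]
    exact h σ hσ

/-- For `k ≥ 2`, a `k`-uniform hypergraph `F` with `t` vertices
and `ℓ ≥ 2` edges, `n ≥ t` and `τ = n^{-1/(2ℓ)}`, the codegree function of the
auxiliary hypergraph `H(F,n)` satisfies
`δ(H,τ) ≤ 2^{binom(ℓ,2)} t^t n^{-1/2}`. -/
theorem aux_codegree_bound (k t ℓ n : ℕ) (hk : 2 ≤ k)
    (F : Finset (Finset (Fin t))) (hF : IsKUniform k F) (hℓ : F.card = ℓ)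
    (hℓ2 : 2 ≤ ℓ) (hn : t ≤ n) :
    codegFn (auxVerts k n) (auxEdges k n F) ℓ ((n : ℝ) ^ (-(1 : ℝ) / (2 * ℓ))) ≤
      (2 : ℝ) ^ (Nat.choose ℓ 2) * (t : ℝ) ^ t * (n : ℝ) ^ (-(1 : ℝ) / 2) := by
  set τ : ℝ := (n : ℝ) ^ (-(1 : ℝ) / (2 * ℓ)) with hτdef
  by_cases hzero : avgDeg (auxVerts k n) (auxEdges k n F) = 0
  · rw [codegFn, if_pos hzero]
    positivity
  rw [codegFn, if_neg hzero]
  -- basic facts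
  have hHne : (auxEdges k n F).Nonempty := by
    by_contra hcon
    rw [Finset.not_nonempty_iff_eq_empty] at hcon
    apply hzero
    rw [avgDeg]
    have : ∀ v ∈ auxVerts k n, (degSet (auxEdges k n F) {v} : ℝ) = 0 := by
      intro v _
      rw [degSet, hcon]
      simp
    rw [Finset.sum_congr rfl this, Finset.sum_const, smul_zero, zero_div]
  obtain ⟨E₀, hE₀⟩ := hHne
  have cover : F.sup id = (Finset.univ : Finset (Fin t)) := cover_of_mem hE₀
  have hkt : k + 1 ≤ t := by
    obtain ⟨e₁, he₁, e₂, he₂, hee⟩ := Finset.one_lt_card.1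
      (by omega : 1 < F.card)
    have h1 : k + 1 ≤ (e₁ ∪ e₂).card := by
      by_contra hcon
      push_neg at hcon
      have hc1 := hF e₁ he₁
      have hc2 := hF e₂ he₂
      have hx1 : e₁ = e₁ ∪ e₂ := Finset.eq_of_subset_of_card_le
        Finset.subset_union_left (by omega)
      have hx2 : e₂ = e₁ ∪ e₂ := Finset.eq_of_subset_of_card_le
        Finset.subset_union_right (by omega)
      exact hee (hx1.trans hx2.symm)
    calc k + 1 ≤ (e₁ ∪ e₂).card := h1
      _ ≤ (Finset.univ : Finset (Fin t)).card := Finset.card_le_card (Finset.subset_univ _)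
      _ = t := by rw [Finset.card_univ, Fintype.card_fin]
  have htl : t ≤ k * ℓ := by
    calc t = (Finset.univ : Finset (Fin t)).card := by rw [Finset.card_univ, Fintype.card_fin]
      _ = (F.sup id).card := by rw [cover]
      _ = (F.biUnion id).card := by rw [Finset.sup_eq_biUnion]
      _ ≤ ∑ e ∈ F, (id e).card := Finset.card_biUnion_le
      _ = ∑ e ∈ F, k := Finset.sum_congr rfl (fun e he => by rw [id, hF e he])
      _ = ℓ * k := by rw [Finset.sum_const, smul_eq_mul, hℓ]
      _ = k * ℓ := Nat.mul_comm ℓ k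
  have ht1 : 1 ≤ t := by omega
  have hn1 : 1 ≤ n := by omega
  have hn0 : (0:ℝ) < n := by exact_mod_cast hn1
  have hn1' : (1:ℝ) ≤ n := by exact_mod_cast hn1
  have hkn : k ≤ n := by omega
  have hV : (auxVerts k n).card = n.choose k := by
    rw [auxVerts, Finset.card_powersetCard, Finset.card_range]
  have hNpos : 0 < n.choose k := Nat.choose_pos hkn
  have hHsubV : ∀ e ∈ auxEdges k n F, e ⊆ auxVerts k n :=
    fun e he => (mem_auxEdges_iff.1 he).1
  have hHcard : ∀ e ∈ auxEdges k n F, e.card = ℓ :=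
    fun e he => by rw [(mem_auxEdges_iff.1 he).2.1, hℓ]
  have hsumdeg : ∑ v ∈ auxVerts k n, degSet (auxEdges k n F) {v}
      = ℓ * (auxEdges k n F).card :=
    sum_deg_eq _ _ ℓ hHcard hHsubV
  set Hc := (auxEdges k n F).card with hHc
  have hHc1 : 1 ≤ Hc := Finset.card_pos.2 ⟨E₀, hE₀⟩
  have havg : avgDeg (auxVerts k n) (auxEdges k n F)
      = ((ℓ * Hc : ℕ) : ℝ) / ((n.choose k : ℕ) : ℝ) := by
    rw [avgDeg, ← Nat.cast_sum, hsumdeg, hV]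
  set a := permCount F with ha
  have ha1 : 1 ≤ a := permCount_pos
  have hcardH : a * Hc = n.descFactorial t := card_H_eq cover hF
  -- the key natural-number inequality for each j
  have hmaster : n.choose k * (t.descFactorial (k + 1) * n ^ (t - k - 1)) * n
      ≤ ℓ * (n.descFactorial t * t ^ t) :=
    master_ineq k t ℓ n hk hkt hn htl
  -- per-vertex max degree bound
  have hmax : ∀ j, 2 ≤ j → ∀ v ∈ auxVerts k n,
      a * maxDeg (auxVerts k n) (auxEdges k n F) j v
        ≤ t.descFactorial (k + 1) * n ^ (t - (k + 1)) := by
    intro j hj v _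
    rw [maxDeg]
    apply _root_.sup_mul_le
    intro σ hσ
    simp only [Finset.mem_filter, Finset.mem_powersetCard] at hσ
    exact deg_count hF cover σ (by rw [hσ.1.2]; exact hj) hσ.1.1
  -- real-number bound for each deltaJ
  have hdelta : ∀ j ∈ Finset.Icc 2 ℓ,
      deltaJ (auxVerts k n) (auxEdges k n F) τ j
        ≤ (t:ℝ) ^ t * (n:ℝ) ^ (-(1:ℝ)/2) := by
    intro j hj
    obtain ⟨hj2, hjl⟩ := Finset.mem_Icc.1 hj
    -- natural number inequality: S * n ≤ ℓ * Hc * t^t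
    set S := ∑ v ∈ auxVerts k n, maxDeg (auxVerts k n) (auxEdges k n F) j v with hS
    have hSn : S * n ≤ ℓ * Hc * t ^ t := by
      have h1 : a * S ≤ n.choose k * (t.descFactorial (k+1) * n ^ (t - (k+1))) := by
        calc a * S = ∑ v ∈ auxVerts k n,
              a * maxDeg (auxVerts k n) (auxEdges k n F) j v := by
              rw [Finset.mul_sum]
          _ ≤ ∑ _v ∈ auxVerts k n, t.descFactorial (k+1) * n ^ (t - (k+1)) :=
              Finset.sum_le_sum (hmax j hj2)
          _ = n.choose k * (t.descFactorial (k+1) * n ^ (t - (k+1))) := by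
              rw [Finset.sum_const, smul_eq_mul, hV]
      have h2 : a * (S * n) ≤ a * (ℓ * Hc * t ^ t) := by
        calc a * (S * n) = (a * S) * n := by ring
          _ ≤ n.choose k * (t.descFactorial (k+1) * n ^ (t - (k+1))) * n :=
              Nat.mul_le_mul_right n h1
          _ = n.choose k * (t.descFactorial (k+1) * n ^ (t - k - 1)) * n := by
              rw [Nat.sub_sub]
          _ ≤ ℓ * (n.descFactorial t * t ^ t) := hmaster
          _ = ℓ * ((a * Hc) * t ^ t) := by rw [hcardH]
          _ = a * (ℓ * Hc * t ^ t) := by ring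
      exact Nat.le_of_mul_le_mul_left h2 (by omega)
    -- pass to the reals
    have hτpos : (0:ℝ) < τ := Real.rpow_pos_of_pos hn0 _
    have hτj : (0:ℝ) < τ ^ (j - 1) := pow_pos hτpos _
    have hMpos : (0:ℝ) < ((ℓ * Hc : ℕ) : ℝ) := by
      have : 1 ≤ ℓ * Hc := Nat.one_le_iff_ne_zero.2 (by positivity)
      exact_mod_cast Nat.lt_of_lt_of_le Nat.zero_lt_one this
    have hτge : (n:ℝ) ^ (-(1:ℝ)/2) ≤ τ ^ (j - 1) := by
      have h1 : τ ^ (j-1) = (n:ℝ) ^ ((-(1:ℝ)/(2*(ℓ:ℝ))) * ((j-1 : ℕ):ℝ)) := by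
        rw [hτdef, ← Real.rpow_natCast ((n:ℝ) ^ (-(1:ℝ)/(2*(ℓ:ℝ)))) (j-1)]
        exact (Real.rpow_mul (le_of_lt hn0) _ _).symm
      rw [h1]
      apply Real.rpow_le_rpow_of_exponent_le hn1'
      have hj1 : ((j-1 : ℕ):ℝ) ≤ (ℓ:ℝ) := by exact_mod_cast (by omega : j - 1 ≤ ℓ)
      have hj1' : (0:ℝ) ≤ ((j-1 : ℕ):ℝ) := Nat.cast_nonneg _
      have hl0 : (0:ℝ) < (ℓ:ℝ) := by exact_mod_cast (by omega : 0 < ℓ)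
      have heq : (-(1:ℝ)/(2*ℓ)) * ((j-1:ℕ):ℝ) = -(((j-1:ℕ):ℝ)/(2*ℓ)) := by ring
      rw [heq]
      have h2 : ((j-1:ℕ):ℝ)/(2*(ℓ:ℝ)) ≤ 1/2 := by
        rw [div_le_div_iff₀ (by positivity) (by norm_num)]
        nlinarith
      linarith
    have hfrac : (1:ℝ)/n ≤ (n:ℝ) ^ (-(1:ℝ)/2) * τ ^ (j-1) := by
      have h3 : (1:ℝ)/n = (n:ℝ) ^ (-(1:ℝ)/2) * (n:ℝ) ^ (-(1:ℝ)/2) := by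
        have hh : (-(1:ℝ)/2) + (-(1:ℝ)/2) = -1 := by norm_num
        rw [← Real.rpow_add hn0, hh, Real.rpow_neg_one, one_div]
      rw [h3]
      exact mul_le_mul_of_nonneg_left hτge (Real.rpow_nonneg (le_of_lt hn0) _)
    have hden : τ ^ (j-1) * (((auxVerts k n).card : ℕ) : ℝ)
        * avgDeg (auxVerts k n) (auxEdges k n F)
        = τ ^ (j-1) * ((ℓ * Hc : ℕ) : ℝ) := by
      have hNne : ((n.choose k : ℕ):ℝ) ≠ 0 := by
        exact Nat.cast_ne_zero.2 (by omega)
      rw [havg, hV, mul_assoc]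
      congr 1
      field_simp
    rw [deltaJ, ← Nat.cast_sum, hden, div_le_iff₀ (by positivity)]
    have hSreal : (S:ℝ) * n ≤ ((ℓ * Hc : ℕ):ℝ) * (t:ℝ) ^ t := by
      have := hSn
      have hcast : ((S * n : ℕ):ℝ) ≤ ((ℓ * Hc * t ^ t : ℕ):ℝ) := by exact_mod_cast this
      push_cast at hcast
      push_cast
      linarith
    calc (S:ℝ) ≤ ((ℓ * Hc : ℕ):ℝ) * (t:ℝ) ^ t * (1/n) := by
          rw [mul_one_div, le_div_iff₀ hn0]
          exact hSreal
      _ ≤ ((ℓ * Hc : ℕ):ℝ) * (t:ℝ) ^ t * ((n:ℝ) ^ (-(1:ℝ)/2) * τ ^ (j-1)) := by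
          apply mul_le_mul_of_nonneg_left hfrac
          positivity
      _ = (t:ℝ) ^ t * (n:ℝ) ^ (-(1:ℝ)/2) * (τ ^ (j-1) * ((ℓ * Hc : ℕ):ℝ)) := by ring
  -- sum everything up
  have hsum : ∑ j ∈ Finset.Icc 2 ℓ,
      (2:ℝ) ^ (-(Nat.choose (j-1) 2 : ℝ)) * deltaJ (auxVerts k n) (auxEdges k n F) τ j
      ≤ 2 * ((t:ℝ) ^ t * (n:ℝ) ^ (-(1:ℝ)/2)) := by
    have hR : (0:ℝ) ≤ (t:ℝ) ^ t * (n:ℝ) ^ (-(1:ℝ)/2) := by positivity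
    calc ∑ j ∈ Finset.Icc 2 ℓ,
          (2:ℝ) ^ (-(Nat.choose (j-1) 2 : ℝ)) * deltaJ (auxVerts k n) (auxEdges k n F) τ j
        ≤ ∑ j ∈ Finset.Icc 2 ℓ,
          (2:ℝ) ^ (-(Nat.choose (j-1) 2 : ℝ)) * ((t:ℝ) ^ t * (n:ℝ) ^ (-(1:ℝ)/2)) := by
          apply Finset.sum_le_sum
          intro j hj
          exact mul_le_mul_of_nonneg_left (hdelta j hj)
            (Real.rpow_nonneg (by norm_num) _)
      _ = (∑ j ∈ Finset.Icc 2 ℓ, (2:ℝ) ^ (-(Nat.choose (j-1) 2 : ℝ)))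
            * ((t:ℝ) ^ t * (n:ℝ) ^ (-(1:ℝ)/2)) := by
          rw [← Finset.sum_mul]
      _ ≤ 2 * ((t:ℝ) ^ t * (n:ℝ) ^ (-(1:ℝ)/2)) :=
          mul_le_mul_of_nonneg_right (coeff_sum_le ℓ hℓ2) hR
  calc (2:ℝ) ^ ((Nat.choose ℓ 2 : ℝ) - 1) * ∑ j ∈ Finset.Icc 2 ℓ,
        (2:ℝ) ^ (-(Nat.choose (j-1) 2 : ℝ)) * deltaJ (auxVerts k n) (auxEdges k n F) τ j
      ≤ (2:ℝ) ^ ((Nat.choose ℓ 2 : ℝ) - 1) * (2 * ((t:ℝ) ^ t * (n:ℝ) ^ (-(1:ℝ)/2))) :=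
        mul_le_mul_of_nonneg_left hsum (Real.rpow_nonneg (by norm_num) _)
    _ = (2 : ℝ) ^ (Nat.choose ℓ 2) * (t : ℝ) ^ t * (n : ℝ) ^ (-(1 : ℝ) / 2) := by
        rw [Real.rpow_sub (by norm_num : (0:ℝ) < 2), Real.rpow_one, Real.rpow_natCast]
        ring
end
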